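/- For every integer d ≥ 1, the number of subgroups of the additive group ℤ × ℤ of index d equals σ(d) = Σ_{i|d} i. (This is the group-theoretic content of the paper's assertion that the number of automorphism-weighted, connected, degree-d, étale covers of an elliptic curve is σ(d)/d: such covers correspond to index-d subgroups of the fundamental group ℤ², each weighted by 1/d.) -/

import Mathlib

/-- The subgroup of `ℤ × ℤ` generated by `(a,0)` and `(c,b)`. -/
def Hgen (a b : ℕ) (c : ℤ) : AddSubgroup (ℤ × ℤ) where
  carrier := {p | ∃ v : ℤ, p.2 = b * v ∧ (a : ℤ) ∣ p.1 - c * v}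
  zero_mem' := ⟨0, by simp⟩
  add_mem' := by
    rintro p q ⟨v, hv, hd⟩ ⟨w, hw, he⟩
    refine ⟨v + w, by simp [hv, hw]; ring, ?_⟩
    have := dvd_add hd he
    convert this using 1
    · rfl
    simp; ring
  neg_mem' := by
    rintro p ⟨v, hv, hd⟩
    refine ⟨-v, by simp [hv], ?_⟩
    have := hd.neg_right
    convert this using 1
    · rfl
    simp; ring

lemma mem_Hgen {a b : ℕ} {c : ℤ} {p : ℤ × ℤ} :
    p ∈ Hgen a b c ↔ ∃ v : ℤ, p.2 = b * v ∧ (a : ℤ) ∣ p.1 - c * v := Iff.rfl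

def psiH (a : ℕ) (c : ℤ) : ℤ × ℤ →+ ZMod a where
  toFun p := ((p.1 - c * p.2 : ℤ) : ZMod a)
  map_zero' := by simp
  map_add' p q := by push_cast [Prod.fst_add, Prod.snd_add]; ring

def phiH (b : ℕ) : ℤ × ℤ →+ ℤ × ℤ where
  toFun p := (p.1, b * p.2)
  map_zero' := by simp
  map_add' p q := by simp [Prod.ext_iff]; ring

lemma Hgen_eq_map (a b : ℕ) (c : ℤ) :
    Hgen a b c = ((psiH a c).ker).map (phiH b) := by
  ext p
  simp only [mem_Hgen, AddSubgroup.mem_map, AddMonoidHom.mem_ker, psiH, phiH,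
    AddMonoidHom.coe_mk, ZeroHom.coe_mk]
  constructor
  · rintro ⟨v, hv, hd⟩
    refine ⟨(p.1, v), ?_, by simp [Prod.ext_iff, hv.symm]⟩
    rwa [ZMod.intCast_zmod_eq_zero_iff_dvd]
  · rintro ⟨⟨u, v⟩, hk, hp⟩
    simp only [Prod.ext_iff] at hp
    refine ⟨v, hp.2.symm, ?_⟩
    rw [← hp.1]
    rwa [ZMod.intCast_zmod_eq_zero_iff_dvd] at hk

lemma index_Hgen (a b : ℕ) (ha : 0 < a) (hb : 0 < b) (c : ℤ) :
    (Hgen a b c).index = a * b := by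
  rw [Hgen_eq_map]
  have hb' : (b : ℤ) ≠ 0 := by exact_mod_cast hb.ne'
  have hinj : Function.Injective (phiH b) := by
    rintro ⟨x, y⟩ ⟨x', y'⟩ h
    simp only [phiH, AddMonoidHom.coe_mk, ZeroHom.coe_mk, Prod.ext_iff] at h
    exact Prod.ext h.1 (mul_left_cancel₀ hb' h.2)
  rw [AddSubgroup.index_map_of_injective _ hinj]
  congr 1
  · rw [AddSubgroup.index_ker]
    have hsurj : Function.Surjective (psiH a c) := by
      intro z
      obtain ⟨x, rfl⟩ := ZMod.intCast_surjective (n := a) z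
      exact ⟨(x, 0), by simp [psiH]⟩
    rw [AddMonoidHom.range_eq_top.mpr hsurj]
    haveI : NeZero a := ⟨ha.ne'⟩
    rw [Nat.card_congr (AddSubgroup.topEquiv.toEquiv), Nat.card_eq_fintype_card, ZMod.card]
  · have : (phiH b).range = (⊤ : AddSubgroup ℤ).prod (AddSubgroup.zmultiples (b : ℤ)) := by
      ext ⟨x, y⟩
      simp only [phiH, AddMonoidHom.mem_range, AddMonoidHom.coe_mk, ZeroHom.coe_mk,
        AddSubgroup.mem_prod, AddSubgroup.mem_top, true_and, Int.mem_zmultiples_iff,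
        Prod.mk.injEq, Prod.ext_iff]
      constructor
      · rintro ⟨⟨u, v⟩, h1, h2⟩; exact ⟨v, h2.symm⟩
      · rintro ⟨k, hk⟩; exact ⟨(x, k), rfl, hk.symm⟩
    rw [this, AddSubgroup.index_prod, AddSubgroup.index_top, Int.index_zmultiples]
    simp

lemma aZero_mem_Hgen (a b : ℕ) (c : ℤ) : ((a : ℤ), (0:ℤ)) ∈ Hgen a b c :=
  ⟨0, by simp, by simp⟩

lemma cb_mem_Hgen (a b : ℕ) (c : ℤ) : ((c : ℤ), (b:ℤ)) ∈ Hgen a b c :=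
  ⟨1, by simp, by simp⟩

lemma Hgen_inj {a b a' b' : ℕ} {c c' : ℤ} (ha : 0 < a) (hb : 0 < b)
    (ha' : 0 < a') (hb' : 0 < b') (hc0 : 0 ≤ c) (hca : c < a) (hc0' : 0 ≤ c') (hca' : c' < a')
    (h : Hgen a b c = Hgen a' b' c') : a = a' ∧ b = b' ∧ c = c' := by
  have dvd1 : ∀ (a₁ b₁ a₂ b₂ : ℕ) (c₁ c₂ : ℤ), 0 < b₂ → Hgen a₁ b₁ c₁ = Hgen a₂ b₂ c₂ →
      (a₂ : ℤ) ∣ (a₁ : ℤ) := by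
    intro a₁ b₁ a₂ b₂ c₁ c₂ hb₂ he
    obtain ⟨v, hv, hd⟩ := he ▸ aZero_mem_Hgen a₁ b₁ c₁
    have hv0 : v = 0 := by
      have hbz : (b₂ : ℤ) ≠ 0 := by exact_mod_cast hb₂.ne'
      rcases mul_eq_zero.mp hv.symm with hh | hh
      · exact absurd hh hbz
      · exact hh
    simpa [hv0] using hd
  have dvd2 : ∀ (a₁ b₁ a₂ b₂ : ℕ) (c₁ c₂ : ℤ), Hgen a₁ b₁ c₁ = Hgen a₂ b₂ c₂ →
      (b₂ : ℤ) ∣ (b₁ : ℤ) := by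
    intro a₁ b₁ a₂ b₂ c₁ c₂ he
    obtain ⟨v, hv, -⟩ := he ▸ cb_mem_Hgen a₁ b₁ c₁
    exact ⟨v, hv⟩
  have haa : a = a' := by
    have h1 := dvd1 a b a' b' c c' hb' h
    have h2 := dvd1 a' b' a b c' c hb h.symm
    exact_mod_cast Int.dvd_antisymm (by positivity) (by positivity) h2 h1
  have hbb : b = b' := by
    have h1 := dvd2 a b a' b' c c' h
    have h2 := dvd2 a' b' a b c' c h.symm
    exact_mod_cast Int.dvd_antisymm (by positivity) (by positivity) h2 h1
  refine ⟨haa, hbb, ?_⟩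
  subst haa hbb
  obtain ⟨v, hv, hd⟩ := h ▸ cb_mem_Hgen a b c
  have hv1 : v = 1 := by
    have hbz : (b : ℤ) ≠ 0 := by exact_mod_cast hb.ne'
    have : (b : ℤ) * 1 = b * v := by simpa using hv
    exact (mul_left_cancel₀ hbz this).symm
  subst hv1
  have hd' : (a : ℤ) ∣ c - c' := by simpa using hd
  have := Int.eq_zero_of_abs_lt_dvd hd' (abs_lt.mpr ⟨by omega, by omega⟩)
  omega

lemma exists_Hgen (d : ℕ) (hd : d ≠ 0) (H : AddSubgroup (ℤ × ℤ)) (hH : H.index = d) :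
    ∃ (a b : ℕ) (c : ℤ), 0 < a ∧ 0 < b ∧ 0 ≤ c ∧ c < a ∧ a * b = d ∧ H = Hgen a b c := by
  -- the subgroups A = {x | (x,0) ∈ H} and B = snd '' H of ℤ
  set A : AddSubgroup ℤ := H.comap (AddMonoidHom.inl ℤ ℤ) with hA
  set B : AddSubgroup ℤ := H.map (AddMonoidHom.snd ℤ ℤ) with hB
  obtain ⟨g, hg⟩ := Int.subgroup_cyclic A
  obtain ⟨g', hg'⟩ := Int.subgroup_cyclic B
  rw [← AddSubgroup.zmultiples_eq_closure] at hg hg'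
  -- A has nonzero index
  have hAidx : A.index ≠ 0 := by
    intro h0
    have : A.index ∣ H.index := by
      rw [hA, AddSubgroup.index_comap]
      exact AddSubgroup.relIndex_dvd_index_of_normal H _
    rw [h0, hH] at this
    exact hd (zero_dvd_iff.mp this)
  have hBidx : B.index ≠ 0 := by
    intro h0
    have hle : H ≤ B.comap (AddMonoidHom.snd ℤ ℤ) := fun p hp =>
      AddSubgroup.mem_comap.mpr (AddSubgroup.mem_map_of_mem _ hp)
    have hcs : (B.comap (AddMonoidHom.snd ℤ ℤ)).index = B.index :=
      AddSubgroup.index_comap_of_surjective _ (fun y => ⟨(0, y), rfl⟩)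
    have := AddSubgroup.index_dvd_of_le hle
    rw [hcs, h0, hH] at this
    exact hd (zero_dvd_iff.mp this)
  have hgne : g ≠ 0 := by
    intro h0
    rw [h0] at hg
    rw [hg, Int.index_zmultiples] at hAidx
    simp at hAidx
  have hgne' : g' ≠ 0 := by
    intro h0
    rw [h0] at hg'
    rw [hg', Int.index_zmultiples] at hBidx
    simp at hBidx
  set a : ℕ := g.natAbs with ha'
  set b : ℕ := g'.natAbs with hb'
  have ha : 0 < a := Int.natAbs_pos.mpr hgne
  have hb : 0 < b := Int.natAbs_pos.mpr hgne'
  have hmemA : ∀ x : ℤ, ((x, (0:ℤ)) ∈ H) ↔ (a : ℤ) ∣ x := by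
    intro x
    have : (x, (0:ℤ)) ∈ H ↔ x ∈ A := Iff.rfl
    rw [this, hg, Int.mem_zmultiples_iff, ha', Int.natAbs_dvd]
  have hmemB : ∀ y : ℤ, (y ∈ B) ↔ (b : ℤ) ∣ y := by
    intro y
    rw [hg', Int.mem_zmultiples_iff, hb', Int.natAbs_dvd]
  -- pick an element of H whose second coordinate is b
  have hbB : (b : ℤ) ∈ B := (hmemB b).mpr dvd_rfl
  obtain ⟨p, hpH, hpb⟩ := AddSubgroup.mem_map.mp hbB
  have haH : (((a:ℤ)), (0:ℤ)) ∈ H := (hmemA a).mpr dvd_rfl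
  set c : ℤ := p.1 % a with hc'
  have haz : (a : ℤ) ≠ 0 := by exact_mod_cast ha.ne'
  have hc0 : 0 ≤ c := Int.emod_nonneg _ haz
  have hca : c < a := Int.emod_lt_of_pos _ (by exact_mod_cast ha)
  have hcbH : ((c, (b:ℤ)) : ℤ × ℤ) ∈ H := by
    have hp2 : p.2 = (b : ℤ) := hpb
    have : ((c, (b:ℤ)) : ℤ × ℤ) = (p.1, p.2) - (p.1 / a) • ((a:ℤ), (0:ℤ)) := by
      refine Prod.ext ?_ ?_
      · show c = p.1 - p.1 / a * a
        rw [hc', Int.emod_def]; ring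
      · show (b:ℤ) = p.2 - p.1 / a * 0
        rw [hp2]; ring
    rw [this]
    exact AddSubgroup.sub_mem _ (by simpa using hpH) (AddSubgroup.zsmul_mem _ haH _)
  refine ⟨a, b, c, ha, hb, hc0, hca, ?_, ?_⟩
  · have heq : H = Hgen a b c := by
      ext q
      obtain ⟨x, y⟩ := q
      constructor
      · intro hq
        have hyB : y ∈ B := AddSubgroup.mem_map_of_mem _ hq
        obtain ⟨v, hv⟩ := (hmemB y).mp hyB
        refine ⟨v, hv, ?_⟩
        have : ((x - c * v, (0:ℤ)) : ℤ × ℤ) = (x, y) - v • (c, (b:ℤ)) := by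
          refine Prod.ext (by show x - c * v = x - v * c; ring)
            (by show (0:ℤ) = y - v * b; rw [hv]; ring)
        have hmem : ((x - c * v, (0:ℤ)) : ℤ × ℤ) ∈ H := by
          rw [this]
          exact AddSubgroup.sub_mem _ hq (AddSubgroup.zsmul_mem _ hcbH _)
        exact (hmemA _).mp hmem
      · rintro ⟨v, hv, k, hk⟩
        have : ((x, y) : ℤ × ℤ) = v • (c, (b:ℤ)) + k • ((a:ℤ), (0:ℤ)) := by
          refine Prod.ext (by show x = v * c + k * a; linear_combination hk)
            (by show y = v * b + k * 0; linear_combination hv)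
        rw [this]
        exact AddSubgroup.add_mem _ (AddSubgroup.zsmul_mem _ hcbH _)
          (AddSubgroup.zsmul_mem _ haH _)
    rw [heq, index_Hgen a b ha hb c] at hH
    exact hH
  · -- repeat the same equality
    ext q
    obtain ⟨x, y⟩ := q
    constructor
    · intro hq
      have hyB : y ∈ B := AddSubgroup.mem_map_of_mem _ hq
      obtain ⟨v, hv⟩ := (hmemB y).mp hyB
      refine ⟨v, hv, ?_⟩
      have : ((x - c * v, (0:ℤ)) : ℤ × ℤ) = (x, y) - v • (c, (b:ℤ)) := by
        refine Prod.ext (by show x - c * v = x - v * c; ring)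
          (by show (0:ℤ) = y - v * b; rw [hv]; ring)
      have hmem : ((x - c * v, (0:ℤ)) : ℤ × ℤ) ∈ H := by
        rw [this]
        exact AddSubgroup.sub_mem _ hq (AddSubgroup.zsmul_mem _ hcbH _)
      exact (hmemA _).mp hmem
    · rintro ⟨v, hv, k, hk⟩
      have : ((x, y) : ℤ × ℤ) = v • (c, (b:ℤ)) + k • ((a:ℤ), (0:ℤ)) := by
        refine Prod.ext (by show x = v * c + k * a; linear_combination hk)
          (by show y = v * b + k * 0; linear_combination hv)
      rw [this]
      exact AddSubgroup.add_mem _ (AddSubgroup.zsmul_mem _ hcbH _)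
        (AddSubgroup.zsmul_mem _ haH _)

/-- for every `d ≥ 1`, the number of (additive) subgroups of `ℤ × ℤ` of
index `d` equals `σ(d) = Σ_{i ∣ d} i`. -/
theorem stmt_7 (d : ℕ) (hd : 1 ≤ d) :
    Nat.card {H : AddSubgroup (ℤ × ℤ) // H.index = d} = ∑ i ∈ d.divisors, i := by
  classical
  have hd0 : d ≠ 0 := by omega
  let F : ((x : d.divisorsAntidiagonal) × Fin x.1.1) →
      {H : AddSubgroup (ℤ × ℤ) // H.index = d} := fun t =>
    ⟨Hgen t.1.1.1 t.1.1.2 t.2, by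
      obtain ⟨hprod, -⟩ := Nat.mem_divisorsAntidiagonal.mp t.1.2
      have ha : 0 < t.1.1.1 := Nat.pos_of_ne_zero fun h => hd0 (by rw [← hprod, h, zero_mul])
      have hb : 0 < t.1.1.2 := Nat.pos_of_ne_zero fun h => hd0 (by rw [← hprod, h, mul_zero])
      rw [index_Hgen _ _ ha hb, hprod]⟩
  have hbij : Function.Bijective F := by
    constructor
    · rintro ⟨⟨⟨a, b⟩, hab⟩, c⟩ ⟨⟨⟨a', b'⟩, hab'⟩, c'⟩ h
      have hEq : Hgen a b (c : ℤ) = Hgen a' b' (c' : ℤ) := congrArg Subtype.val h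
      obtain ⟨hprod, -⟩ := Nat.mem_divisorsAntidiagonal.mp hab
      obtain ⟨hprod', -⟩ := Nat.mem_divisorsAntidiagonal.mp hab'
      have ha : 0 < a := Nat.pos_of_ne_zero fun h => hd0 (by rw [← hprod, h, Nat.zero_mul])
      have hb : 0 < b := Nat.pos_of_ne_zero fun h => hd0 (by rw [← hprod, h, Nat.mul_zero])
      have ha' : 0 < a' := Nat.pos_of_ne_zero fun h => hd0 (by rw [← hprod', h, Nat.zero_mul])
      have hb' : 0 < b' := Nat.pos_of_ne_zero fun h => hd0 (by rw [← hprod', h, Nat.mul_zero])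
      obtain ⟨haa, hbb, hcc⟩ := Hgen_inj ha hb ha' hb' (by positivity)
        (by exact_mod_cast c.isLt) (by positivity) (by exact_mod_cast c'.isLt) hEq
      subst haa hbb
      have hc : c = c' := Fin.ext (by exact_mod_cast hcc)
      subst hc
      rfl
    · rintro ⟨H, hH⟩
      obtain ⟨a, b, c, ha, hb, hc0, hca, hab, heq⟩ := exists_Hgen d hd0 H hH
      refine ⟨⟨⟨(a, b), Nat.mem_divisorsAntidiagonal.mpr ⟨hab, hd0⟩⟩,
        ⟨c.toNat, show c.toNat < a by omega⟩⟩, ?_⟩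
      apply Subtype.ext
      show Hgen a b ((c.toNat : ℕ) : ℤ) = H
      rw [Int.toNat_of_nonneg hc0]
      exact heq.symm
  rw [← Nat.card_eq_of_bijective F hbij, Nat.card_eq_fintype_card, Fintype.card_sigma]
  simp only [Fintype.card_fin]
  rw [Finset.sum_coe_sort d.divisorsAntidiagonal (fun x => x.1)]
  exact Nat.sum_divisorsAntidiagonal (fun i _ => i)
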